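/- If π_i = π_j, then the U² AUC risk is constant over tie-free functions: R_ij(f) = C_ij = (π_i·π_j + (1−π_i)·(1−π_j))/2 + (1−π_i)·π_j for every measurable tie-free f : X → ℝ; in particular R_ij carries no information about the ranking quality of f. -/

import Mathlib

open MeasureTheory

/-- The ranking risk `R(μ,ν)(f) = (μ ⊗ ν){(x,x') : f(x) < f(x')}` (as a real number). -/
noncomputable def rankRisk {X : Type*} [MeasurableSpace X]
    (μ ν : Measure X) (f : X → ℝ) : ℝ :=
  ((μ.prod ν) {p : X × X | f p.1 < f p.2}).toReal

/-- The mixture `p_π = π·p_P + (1−π)·p_N`. -/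
noncomputable def mix {X : Type*} [MeasurableSpace X]
    (pP pN : Measure X) (π : ℝ) : Measure X :=
  ENNReal.ofReal π • pP + ENNReal.ofReal (1 - π) • pN

/-- `f` is tie-free: ties have probability zero under every product of the
class-conditional distributions. -/
def TieFree {X : Type*} [MeasurableSpace X] (pP pN : Measure X) (f : X → ℝ) : Prop :=
  ∀ μ ∈ ({pP, pN} : Set (Measure X)), ∀ ν ∈ ({pP, pN} : Set (Measure X)),
    (μ.prod ν) {p : X × X | f p.1 = f p.2} = 0

lemma mix_isProb {X : Type*} [MeasurableSpace X]
    (pP pN : Measure X) [IsProbabilityMeasure pP] [IsProbabilityMeasure pN]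
    (π : ℝ) (hπ : π ∈ Set.Icc (0 : ℝ) 1) :
    IsProbabilityMeasure (mix pP pN π) := by
  constructor
  simp only [mix, Measure.add_apply, Measure.smul_apply, measure_univ, smul_eq_mul, mul_one]
  rw [← ENNReal.ofReal_add hπ.1 (by linarith [hπ.2])]
  norm_num

lemma mix_ac {X : Type*} [MeasurableSpace X]
    (pP pN : Measure X) (π : ℝ) :
    mix pP pN π ≪ pP + pN := by
  intro s hs
  rw [Measure.add_apply] at hs
  have h1 : pP s = 0 := le_antisymm (le_trans le_self_add hs.le) zero_le
  have h2 : pN s = 0 := le_antisymm (le_trans le_add_self hs.le) zero_le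
  simp [mix, Measure.add_apply, Measure.smul_apply, h1, h2]

/-- when the two class priors coincide, the U² AUC risk is the constant
`C_ij` for every measurable tie-free score function. -/
theorem u2_risk_constant_of_equal_priors {X : Type*} [MeasurableSpace X]
    (pP pN : Measure X) [IsProbabilityMeasure pP] [IsProbabilityMeasure pN]
    (πi πj : ℝ) (hπi : πi ∈ Set.Icc (0 : ℝ) 1) (hπj : πj ∈ Set.Icc (0 : ℝ) 1)
    (heq : πi = πj) :
    ∀ f : X → ℝ, Measurable f → TieFree pP pN f →
      rankRisk (mix pP pN πi) (mix pP pN πj) f =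
        (πi * πj + (1 - πi) * (1 - πj)) / 2 + (1 - πi) * πj := by
  subst heq
  intro f hf htf
  set μ := mix pP pN πi with hμ
  haveI : IsProbabilityMeasure μ := mix_isProb pP pN πi hπi
  set A : Set (X × X) := {p : X × X | f p.1 < f p.2} with hA
  set B : Set (X × X) := {p : X × X | f p.2 < f p.1} with hB
  set E : Set (X × X) := {p : X × X | f p.1 = f p.2} with hE
  have hmf1 : Measurable fun p : X × X => f p.1 := hf.comp measurable_fst
  have hmf2 : Measurable fun p : X × X => f p.2 := hf.comp measurable_snd
  have hAm : MeasurableSet A := measurableSet_lt hmf1 hmf2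
  have hBm : MeasurableSet B := measurableSet_lt hmf2 hmf1
  -- ties are null under μ ⊗ μ
  have hEnull : (μ.prod μ) E = 0 := by
    have hac : μ.prod μ ≪ (pP + pN).prod (pP + pN) :=
      Measure.AbsolutelyContinuous.prod (mix_ac pP pN πi) (mix_ac pP pN πi)
    apply hac
    rw [Measure.add_prod, Measure.prod_add, Measure.prod_add, Measure.add_apply,
      Measure.add_apply, Measure.add_apply]
    rw [htf pP (by simp) pP (by simp), htf pP (by simp) pN (by simp),
      htf pN (by simp) pP (by simp), htf pN (by simp) pN (by simp)]
    simp
  -- symmetry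
  have hswap : (μ.prod μ) B = (μ.prod μ) A := by
    have h := Measure.prod_swap (μ := μ) (ν := μ)
    have hBA : B = Prod.swap ⁻¹' A := by
      ext p; simp [hA, hB, Prod.swap]
    calc (μ.prod μ) B = (μ.prod μ) (Prod.swap ⁻¹' A) := by rw [hBA]
      _ = (Measure.map Prod.swap (μ.prod μ)) A := by
          rw [Measure.map_apply measurable_swap hAm]
      _ = (μ.prod μ) A := by rw [h]
  -- complement of A equals B up to the null set E
  have hcompl : (μ.prod μ) Aᶜ = (μ.prod μ) B := by
    apply le_antisymm
    · have hsub : Aᶜ ⊆ B ∪ E := by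
        intro p hp
        simp only [hA, Set.mem_compl_iff, Set.mem_setOf_eq, not_lt] at hp
        rcases lt_or_eq_of_le hp with h | h
        · exact Or.inl h
        · exact Or.inr h.symm
      calc (μ.prod μ) Aᶜ ≤ (μ.prod μ) (B ∪ E) := measure_mono hsub
        _ ≤ (μ.prod μ) B + (μ.prod μ) E := measure_union_le _ _
        _ = (μ.prod μ) B := by rw [hEnull, add_zero]
    · apply measure_mono
      intro p hp
      simp only [hA, hB, Set.mem_compl_iff, Set.mem_setOf_eq, not_lt] at *
      exact hp.le
  have hone : (μ.prod μ) A + (μ.prod μ) Aᶜ = 1 := by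
    rw [measure_add_measure_compl hAm]
    exact measure_univ
  rw [hcompl, hswap] at hone
  have hhalf : (μ.prod μ) A = 1 / 2 := by
    have h2 : 2 * (μ.prod μ) A = 1 := by rw [two_mul]; exact hone
    rw [ENNReal.eq_div_iff (by norm_num) (by norm_num), h2]
  have : rankRisk μ μ f = 1 / 2 := by
    rw [rankRisk, ← hA, hhalf]
    simp [ENNReal.toReal_div]
  rw [this]
  ring
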